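/- Let F_1 be a forest with edge partition (E_P, E_Δ), components V_1,...,V_q of (V, E_Δ), and a hereditary domination function R with R(x) contained in the component of x and satisfying x ∈ R(x) and (y ∈ R(x) → R(y) ⊆ R(x)). Construct F_2 on the same vertex set by taking, for each E_P edge {x,y} with x ∈ V_i, y ∈ V_j (i ≠ j), all edges between R(x) and R(y), and assume between any two components there is at most one E_P edge. Then each component V_i is an independent set in F_2, and for vertices x, y in the same component with x ∈ R(y), the F_2-neighborhood of y is contained in the F_2-neighborhood of x. -/
import Mathlib


/-- Adjacency of the graph `F₂`: for each `E_P`-edge `{x,y}` of `F₁` between distinct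
`E_Δ`-components, all pairs between `R(x)` and `R(y)` are edges. -/
def adjF2 {V : Type*} (F : SimpleGraph V) (EΔ : Set (Sym2 V)) (R : V → Set V)
    (a b : V) : Prop :=
  ∃ x y, F.Adj x y ∧ s(x, y) ∉ EΔ ∧
    ¬ (SimpleGraph.fromEdgeSet EΔ).Reachable x y ∧
    ((a ∈ R x ∧ b ∈ R y) ∨ (a ∈ R y ∧ b ∈ R x))

/-- each `E_Δ`-component is an independent set in `F₂`; and for `x, y` in the
same component with `x ∈ R(y)`, the `F₂`-neighborhood of `y` is contained in that of `x`. -/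
theorem stmt10 {V : Type*} (F : SimpleGraph V) (EΔ : Set (Sym2 V)) (R : V → Set V)
    (hEΔ : EΔ ⊆ F.edgeSet) (hacyclic : F.IsAcyclic)
    (hRrefl : ∀ x, x ∈ R x)
    (hRtrans : ∀ x y, y ∈ R x → R y ⊆ R x)
    (hRcomp : ∀ x y, y ∈ R x → (SimpleGraph.fromEdgeSet EΔ).Reachable x y)
    (honeEdge : ∀ a b a' b' : V, F.Adj a b → F.Adj a' b' →
      s(a, b) ∉ EΔ → s(a', b') ∉ EΔ →
      (SimpleGraph.fromEdgeSet EΔ).Reachable a a' →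
      (SimpleGraph.fromEdgeSet EΔ).Reachable b b' →
      ¬ (SimpleGraph.fromEdgeSet EΔ).Reachable a b →
      s(a, b) = s(a', b')) :
    (∀ a b : V, (SimpleGraph.fromEdgeSet EΔ).Reachable a b → ¬ adjF2 F EΔ R a b) ∧
    (∀ x y : V, (SimpleGraph.fromEdgeSet EΔ).Reachable x y → x ∈ R y →
      ∀ z, adjF2 F EΔ R y z → adjF2 F EΔ R x z) := by
  constructor
  · rintro a b hab ⟨u, v, huv, hne, hnr, ⟨ha, hb⟩ | ⟨ha, hb⟩⟩
    · exact hnr ((hRcomp u a ha).trans (hab.trans (hRcomp v b hb).symm))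
    · exact hnr ((hRcomp u b hb).trans (hab.symm.trans (hRcomp v a ha).symm))
  · rintro x y hxy hx z ⟨u, v, huv, hne, hnr, ⟨hy, hz⟩ | ⟨hy, hz⟩⟩
    · exact ⟨u, v, huv, hne, hnr, Or.inl ⟨hRtrans u y hy hx, hz⟩⟩
    · exact ⟨u, v, huv, hne, hnr, Or.inr ⟨hRtrans v y hy hx, hz⟩⟩
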